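/- Let R be a perfect valuation ring of characteristic p with valuation v_R, and let φ denote the p-power Frobenius on d×d matrices over R (applied entrywise). Suppose Z̄, Ā, C̄ are d×d matrices over R with all entries of Z̄ of positive valuation, satisfying Z̄ = Ā·φ(Z̄)·C̄, where Ā and C̄ have entries of nonnegative valuation. Then Z̄ = 0. -/

import Mathlib

/-- Uniqueness argument in Lemma 5.2: let `R` be a perfect valuation ring (a
domain with a faithful valuation `v`) of characteristic `p`, and let `φ` be the
entrywise `p`-power Frobenius on matrices.  If `Z̄, Ā, C̄` are `d×d` matrices
over `R` with all entries of `Z̄` of positive valuation (`v < 1`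
multiplicatively), all entries of `Ā, C̄` of nonnegative valuation (`v ≤ 1`),
and `Z̄ = Ā·φ(Z̄)·C̄`, then `Z̄ = 0`. -/
theorem stmt_12 {R : Type*} [CommRing R] [IsDomain R] (p : ℕ) [Fact p.Prime]
    [CharP R p] [PerfectRing R p] [ExpChar R p]
    {Γ₀ : Type*} [LinearOrderedCommGroupWithZero Γ₀] (v : Valuation R Γ₀)
    (hv : ∀ x : R, v x = 0 ↔ x = 0)
    {d : ℕ} (Z A C : Matrix (Fin d) (Fin d) R)
    (hZ : ∀ i j, v (Z i j) < 1)
    (hA : ∀ i j, v (A i j) ≤ 1) (hC : ∀ i j, v (C i j) ≤ 1)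
    (heq : Z = A * Z.map (frobenius R p) * C) :
    Z = 0 := by
  by_contra hne
  -- there is a nonzero entry
  have hex : ∃ i j, Z i j ≠ 0 := by
    by_contra h
    push_neg at h
    exact hne (by ext i j; simp [h i j])
  obtain ⟨i₁, j₁, hij⟩ := hex
  haveI : Nonempty (Fin d × Fin d) := ⟨(i₁, j₁)⟩
  obtain ⟨⟨i₀, j₀⟩, hmax⟩ :=
    Finite.exists_max (fun ij : Fin d × Fin d => v (Z ij.1 ij.2))
  set m := v (Z i₀ j₀) with hm
  have hmax' : ∀ i j, v (Z i j) ≤ m := fun i j => hmax (i, j)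
  have hm0 : m ≠ 0 := by
    intro h0
    have := hmax' i₁ j₁
    rw [h0, le_zero_iff] at this
    exact hij ((hv _).mp this)
  have hm1 : m < 1 := hZ i₀ j₀
  have hp : 2 ≤ p := (Fact.out : p.Prime).two_le
  -- bound the (i₀,j₀) entry of the product
  have key : m ≤ m ^ p := by
    conv_lhs => rw [hm, heq]
    rw [Matrix.mul_apply]
    refine Valuation.map_sum_le v fun k _ => ?_
    rw [Valuation.map_mul]
    calc v ((A * Z.map (frobenius R p)) i₀ k) * v (C k j₀)
        ≤ v ((A * Z.map (frobenius R p)) i₀ k) * 1 := mul_le_mul' le_rfl (hC k j₀)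
      _ = v ((A * Z.map (frobenius R p)) i₀ k) := mul_one _
      _ ≤ m ^ p := by
          rw [Matrix.mul_apply]
          refine Valuation.map_sum_le v fun l _ => ?_
          rw [Valuation.map_mul, Matrix.map_apply, frobenius_def, Valuation.map_pow]
          calc v (A i₀ l) * v (Z l k) ^ p ≤ 1 * m ^ p :=
                mul_le_mul' (hA i₀ l) (pow_le_pow_left' (hmax' l k) p)
            _ = m ^ p := one_mul _
  -- contradiction: m^p < m since 0 < m < 1 and p ≥ 2
  have hlt : m ^ p < m := by
    calc m ^ p = m * m ^ (p - 1) := by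
          rw [← pow_succ']
          congr 1
          omega
      _ < m * 1 := by
          refine mul_lt_mul_of_pos_left ?_ (zero_lt_iff.mpr hm0)
          exact pow_lt_one₀ zero_le' hm1 (by omega)
      _ = m := mul_one m
  exact absurd key (not_le.mpr hlt)
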